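/- Let f_1, ..., f_n be real analytic functions on an open interval containing a compact interval I, with derivatives f_1', ..., f_n' linearly independent and nonvanishing on I, and suppose f_n' never vanishes. Then the functions (f_i ∘ f_n⁻¹)'' for 1 ≤ i ≤ n-1 are linearly independent, where f_n⁻¹ is the inverse of f_n restricted to I. Equivalently, if a_1, ..., a_{n-1} are real numbers with Σ a_i (f_i ∘ f_n⁻¹)'' ≡ 0 on f_n(I), then all a_i = 0. -/

import Mathlib

open Set Filter
open scoped Topology

/-- If `f 0, ..., f n` are real analytic on an open set containing the compact
interval `[a, b]`, with linearly independent and nonvanishing derivatives on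
`[a, b]`, and `h` is the inverse of the last function `f (Fin.last n)` on
`[a, b]`, then the second derivatives `(f i ∘ h)''` for `i < n` are linearly
independent as functions on `f (Fin.last n) '' [a, b]`. -/
theorem stmt_7 (n : ℕ) (a b : ℝ) (hab : a < b) (U : Set ℝ) (hU : IsOpen U)
    (hIU : Set.Icc a b ⊆ U) (f : Fin (n + 1) → ℝ → ℝ)
    (hf : ∀ i, AnalyticOnNhd ℝ (f i) U)
    (hind : ∀ c : Fin (n + 1) → ℝ,
      (∀ x ∈ Set.Icc a b, ∑ i, c i * deriv (f i) x = 0) → c = 0)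
    (hne : ∀ i, ∀ x ∈ Set.Icc a b, deriv (f i) x ≠ 0)
    (h : ℝ → ℝ) (hinv : ∀ x ∈ Set.Icc a b, h (f (Fin.last n) x) = x)
    (c : Fin n → ℝ)
    (hzero : ∀ y ∈ f (Fin.last n) '' Set.Icc a b,
      ∑ i : Fin n, c i * deriv (deriv (f i.castSucc ∘ h)) y = 0) :
    c = 0 := by
  set g := f (Fin.last n) with hg_def
  have hIoo : Set.Ioo a b ⊆ Set.Icc a b := Set.Ioo_subset_Icc_self
  have hxU : ∀ x ∈ Set.Icc a b, x ∈ U := fun x hx => hIU hx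
  have hderiv_an : ∀ i, AnalyticOnNhd ℝ (deriv (f i)) U := fun i => (hf i).deriv
  -- strict derivatives
  have hstrict : ∀ i, ∀ x ∈ Set.Icc a b, HasStrictDerivAt (f i) (deriv (f i) x) x :=
    fun i x hx => ((hf i x (hxU x hx)).contDiffAt (n := 1)).hasStrictDerivAt one_ne_zero
  set J := g '' Set.Ioo a b with hJ_def
  -- key facts at points of `Ioo a b`
  have key : ∀ x ∈ Set.Ioo a b,
      HasStrictDerivAt h (deriv g x)⁻¹ (g x) ∧ J ∈ 𝓝 (g x) := by
    intro x hx
    have hgs := hstrict (Fin.last n) x (hIoo hx)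
    have hgne : deriv g x ≠ 0 := hne (Fin.last n) x (hIoo hx)
    have hev : ∀ᶠ t in 𝓝 x, h (g t) = t := by
      filter_upwards [Ioo_mem_nhds hx.1 hx.2] with t ht
      exact hinv t (hIoo ht)
    refine ⟨hgs.to_local_left_inverse hgne hev, ?_⟩
    rw [← hgs.map_nhds_eq hgne]
    exact Filter.image_mem_map (Ioo_mem_nhds hx.1 hx.2)
  have hJopen : IsOpen J := by
    rw [isOpen_iff_mem_nhds]
    rintro y ⟨x, hx, rfl⟩
    exact (key x hx).2
  -- formula for the first derivative of `f i ∘ h` on `J`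
  have hderivF : ∀ i : Fin n, Set.EqOn (deriv (f i.castSucc ∘ h))
      (fun y => deriv (f i.castSucc) (h y) * (deriv g (h y))⁻¹) J := by
    rintro i y ⟨x, hx, rfl⟩
    have hhx : h (g x) = x := hinv x (hIoo hx)
    have hh : HasDerivAt h (deriv g x)⁻¹ (g x) := (key x hx).1.hasDerivAt
    have hfi : HasDerivAt (f i.castSucc) (deriv (f i.castSucc) (h (g x))) (h (g x)) := by
      rw [hhx]
      exact (hstrict i.castSucc x (hIoo hx)).hasDerivAt
    have hcomp := hfi.comp (g x) hh
    simp only [hhx] at hcomp ⊢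
    exact hcomp.deriv
  -- differentiability of these first derivatives on `J`
  have hd2 : ∀ i : Fin n, ∀ y ∈ J, DifferentiableAt ℝ (deriv (f i.castSucc ∘ h)) y := by
    rintro i y ⟨x, hx, rfl⟩
    have hhx : h (g x) = x := hinv x (hIoo hx)
    have hh : DifferentiableAt ℝ h (g x) := (key x hx).1.hasDerivAt.differentiableAt
    have hnum : DifferentiableAt ℝ (fun y => deriv (f i.castSucc) (h y)) (g x) := by
      have h1 : DifferentiableAt ℝ (deriv (f i.castSucc)) (h (g x)) := by
        rw [hhx]; exact (hderiv_an i.castSucc x (hxU x (hIoo hx))).differentiableAt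
      exact h1.comp (g x) hh
    have hden : DifferentiableAt ℝ (fun y => deriv g (h y)) (g x) := by
      have h1 : DifferentiableAt ℝ (deriv g) (h (g x)) := by
        rw [hhx]; exact (hderiv_an (Fin.last n) x (hxU x (hIoo hx))).differentiableAt
      exact h1.comp (g x) hh
    have hdenne : deriv g (h (g x)) ≠ 0 := by
      rw [hhx]; exact hne (Fin.last n) x (hIoo hx)
    have hRHS : DifferentiableAt ℝ
        (fun y => deriv (f i.castSucc) (h y) * (deriv g (h y))⁻¹) (g x) :=
      hnum.mul (hden.inv hdenne)
    have hEq : deriv (f i.castSucc ∘ h)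
        =ᶠ[𝓝 (g x)] fun y => deriv (f i.castSucc) (h y) * (deriv g (h y))⁻¹ :=
      Filter.eventuallyEq_of_mem ((key x hx).2) (hderivF i)
    exact hEq.differentiableAt_iff.2 hRHS
  -- the function `φ` has derivative zero on `J`
  set φ : ℝ → ℝ := fun y => ∑ i : Fin n, c i * deriv (f i.castSucc ∘ h) y with hφ_def
  have hφ0 : ∀ y ∈ J, HasDerivAt φ 0 y := by
    intro y hy
    have hsum : HasDerivAt φ
        (∑ i : Fin n, c i * deriv (deriv (f i.castSucc ∘ h)) y) y :=
      HasDerivAt.fun_sum fun i _ => ((hd2 i y hy).hasDerivAt).const_mul (c i)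
    rwa [hzero y (Set.image_mono hIoo hy)] at hsum
  -- `φ` is constant on `J`
  have hJconv : Convex ℝ J := by
    refine convex_iff_ordConnected.2 (IsPreconnected.ordConnected ?_)
    exact isPreconnected_Ioo.image g fun x hx =>
      ((hf (Fin.last n) x (hxU x (hIoo hx))).continuousAt).continuousWithinAt
  have hφdiff : DifferentiableOn ℝ φ J :=
    fun y hy => ((hφ0 y hy).differentiableAt).differentiableWithinAt
  have hφfd : ∀ y ∈ J, fderivWithin ℝ φ J y = 0 := by
    intro y hy
    rw [fderivWithin_of_isOpen hJopen hy, ← toSpanSingleton_deriv, (hφ0 y hy).deriv]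
    exact ContinuousLinearMap.ext fun z => by simp
  have hconst : ∀ y ∈ J, ∀ z ∈ J, φ y = φ z :=
    fun y hy z hz => hJconv.is_const_of_fderivWithin_eq_zero hφdiff hφfd hy hz
  have hx0 : (a + b) / 2 ∈ Set.Ioo a b := ⟨by linarith, by linarith⟩
  set x0 : ℝ := (a + b) / 2 with hx0_def
  set α : ℝ := φ (g x0) with hα_def
  -- on `Ioo a b`, `∑ i, c i * f i' = α * g'`
  have hmain : ∀ x ∈ Set.Ioo a b,
      ∑ i : Fin n, c i * deriv (f i.castSucc) x + (-α) * deriv g x = 0 := by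
    intro x hx
    have hφx : φ (g x) = α :=
      hconst (g x) ⟨x, hx, rfl⟩ (g x0) ⟨x0, hx0, rfl⟩
    have hhx : h (g x) = x := hinv x (hIoo hx)
    have hgne : deriv g x ≠ 0 := hne (Fin.last n) x (hIoo hx)
    have hφeq : φ (g x) = (∑ i : Fin n, c i * deriv (f i.castSucc) x) * (deriv g x)⁻¹ := by
      rw [hφ_def]
      simp only
      rw [Finset.sum_mul]
      refine Finset.sum_congr rfl fun i _ => ?_
      rw [hderivF i ⟨x, hx, rfl⟩]
      simp [hhx, mul_assoc]
    rw [hφeq] at hφx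
    field_simp at hφx
    linarith [hφx]
  -- extend to `Icc a b` by continuity and conclude
  set c' : Fin (n + 1) → ℝ := Fin.snoc c (-α) with hc'_def
  have hψ : ∀ x ∈ Set.Icc a b, ∑ i, c' i * deriv (f i) x = 0 := by
    have heqIoo : Set.EqOn (fun x => ∑ i, c' i * deriv (f i) x) 0 (Set.Ioo a b) := by
      intro x hx
      have := hmain x hx
      simp only [Fin.sum_univ_castSucc, hc'_def, Fin.snoc_castSucc, Fin.snoc_last,
        Pi.zero_apply]
      exact this
    have hcont : ContinuousOn (fun x => ∑ i, c' i * deriv (f i) x) (Set.Icc a b) := by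
      refine continuousOn_finset_sum _ fun i _ => ?_
      exact continuousOn_const.mul (((hderiv_an i).continuousOn).mono hIU)
    intro x hx
    have hxcl : x ∈ closure (Set.Ioo a b) := by rw [closure_Ioo hab.ne]; exact hx
    have hnb : (𝓝[Set.Ioo a b] x).NeBot := mem_closure_iff_nhdsWithin_neBot.1 hxcl
    have h1 : Filter.Tendsto (fun x => ∑ i, c' i * deriv (f i) x) (𝓝[Set.Ioo a b] x)
        (𝓝 (∑ i, c' i * deriv (f i) x)) := ((hcont x hx).mono hIoo).tendsto
    have h2 : Filter.Tendsto (fun x => ∑ i, c' i * deriv (f i) x) (𝓝[Set.Ioo a b] x)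
        (𝓝 0) := by
      refine Filter.Tendsto.congr' ?_ tendsto_const_nhds
      filter_upwards [self_mem_nhdsWithin] with t ht
      exact (heqIoo ht).symm
    exact tendsto_nhds_unique h1 h2
  have hc' : c' = 0 := hind c' hψ
  funext i
  have := congrFun hc' i.castSucc
  simpa [hc'_def, Fin.snoc_castSucc] using this
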